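/- Let J ≥ 1, let c_1, …, c_J be strictly positive real numbers, fix j ∈ {1,…,J}, and define w_j(x) = (x + c_j)^{−2} / Σ_{m=1}^J (x + c_m)^{−2} for x ≥ 0. Then w_j is differentiable on [0,∞) and for every x ≥ 0: |w_j′(x)| ≤ 2 w_j(x) · (c_j^{−1} + (min_{1≤m≤J} c_m)^{−1}). -/

import Mathlib

open Finset

/-- Uniform bound on the derivative of the oracle weight functions
`w_j(x) = (x + c_j)⁻² / Σ_m (x + c_m)⁻²`: for `x ≥ 0`,
`|w_j'(x)| ≤ 2 w_j(x) (c_j⁻¹ + (min_m c_m)⁻¹)`. -/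
theorem weight_derivative_bound (J : ℕ) (hJ : 1 ≤ J) (c : Fin J → ℝ)
    (hc : ∀ m, 0 < c m) (j : Fin J) :
    ∀ x : ℝ, 0 ≤ x →
      DifferentiableAt ℝ
          (fun y => ((y + c j)^2)⁻¹ / ∑ m, ((y + c m)^2)⁻¹) x ∧
        |deriv (fun y => ((y + c j)^2)⁻¹ / ∑ m, ((y + c m)^2)⁻¹) x| ≤
          2 * (((x + c j)^2)⁻¹ / ∑ m, ((x + c m)^2)⁻¹) *
            ((c j)⁻¹ + (Finset.univ.inf' ⟨j, Finset.mem_univ j⟩ c)⁻¹) := by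
  intro x hx
  have hpos : ∀ m : Fin J, 0 < x + c m := fun m =>
    add_pos_of_nonneg_of_pos hx (hc m)
  have hder : ∀ m : Fin J, HasDerivAt (fun y => ((y + c m)^2)⁻¹)
      (-(2*(x + c m)) / ((x + c m)^2)^2) x := by
    intro m
    have h1 : HasDerivAt (fun y : ℝ => y + c m) 1 x := (hasDerivAt_id x).add_const _
    have h2 : HasDerivAt (fun y => (y + c m)^2) (2*(x + c m)) x := by
      have := h1.fun_pow 2
      simpa [mul_comm] using this
    have h1' : 0 < x + c m := hpos m
    have hne : (x + c m)^2 ≠ 0 := by positivity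
    simpa using h2.fun_inv hne
  have hg : HasDerivAt (fun y => ∑ m, ((y + c m)^2)⁻¹)
      (∑ m, -(2*(x + c m)) / ((x + c m)^2)^2) x :=
    HasDerivAt.fun_sum (fun m _ => hder m)
  have hgpos : 0 < ∑ m, ((x + c m)^2)⁻¹ :=
    Finset.sum_pos (fun m _ => by have := hpos m; positivity) ⟨j, mem_univ j⟩
  set S : ℝ := ∑ m, ((x + c m)^2)⁻¹ with hS
  set f : ℝ := ((x + c j)^2)⁻¹ with hf
  have hw : HasDerivAt (fun y => ((y + c j)^2)⁻¹ / ∑ m, ((y + c m)^2)⁻¹)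
      ((-(2*(x + c j)) / ((x + c j)^2)^2 * S -
        f * (∑ m, -(2*(x + c m)) / ((x + c m)^2)^2)) / S^2) x :=
    (hder j).div hg (ne_of_gt hgpos)
  refine ⟨hw.differentiableAt, ?_⟩
  rw [hw.deriv]
  set cmin : ℝ := Finset.univ.inf' ⟨j, Finset.mem_univ j⟩ c with hcmin
  have hcminpos : 0 < cmin := by
    obtain ⟨i, -, hi⟩ := Finset.exists_mem_eq_inf' ⟨j, Finset.mem_univ j⟩ c
    rw [hcmin, hi]; exact hc i
  have hcmin_le : ∀ m : Fin J, cmin ≤ c m := fun m =>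
    Finset.inf'_le c (mem_univ m)
  -- bound on individual derivatives: | -(2(x+cm))/((x+cm)^2)^2 | ≤ 2 ((x+cm)^2)⁻¹ / (c m)
  have hbnd : ∀ m : Fin J, |(-(2*(x + c m)) / ((x + c m)^2)^2)| ≤
      2 * ((x + c m)^2)⁻¹ * (c m)⁻¹ := by
    intro m
    have h1 : 0 < x + c m := hpos m
    rw [abs_div, abs_neg, abs_of_pos (by positivity : (0:ℝ) < 2*(x + c m)),
      abs_of_pos (by positivity : (0:ℝ) < ((x + c m)^2)^2)]
    rw [div_le_iff₀ (by positivity)]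
    have hkey : c m ≤ x + c m := le_add_of_nonneg_left hx
    have hne : (x + c m)^2 ≠ 0 := by positivity
    have hcan : ((x + c m)^2)⁻¹ * ((x + c m)^2)^2 = (x + c m)^2 := by
      rw [sq (((x + c m))^2), ← mul_assoc, inv_mul_cancel₀ hne, one_mul]
    have heq : 2 * ((x + c m) ^ 2)⁻¹ * (c m)⁻¹ * ((x + c m) ^ 2) ^ 2
        = 2 * (x + c m)^2 * (c m)⁻¹ := by
      calc 2 * ((x + c m) ^ 2)⁻¹ * (c m)⁻¹ * ((x + c m) ^ 2) ^ 2
          = 2 * (c m)⁻¹ * (((x + c m)^2)⁻¹ * ((x + c m)^2)^2) := by ring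
        _ = 2 * (x + c m)^2 * (c m)⁻¹ := by rw [hcan]; ring
    rw [heq, ← div_eq_mul_inv, le_div_iff₀ (hc m)]
    nlinarith [hkey, h1]
  -- bound on |g'|
  have hgbnd : |∑ m, -(2*(x + c m)) / ((x + c m)^2)^2| ≤ 2 * cmin⁻¹ * S := by
    calc |∑ m, -(2*(x + c m)) / ((x + c m)^2)^2|
        ≤ ∑ m, |(-(2*(x + c m)) / ((x + c m)^2)^2)| := Finset.abs_sum_le_sum_abs _ _
      _ ≤ ∑ m, 2 * ((x + c m)^2)⁻¹ * cmin⁻¹ := by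
          apply Finset.sum_le_sum
          intro m _
          refine le_trans (hbnd m) ?_
          have h1 : 0 < x + c m := hpos m
          apply mul_le_mul_of_nonneg_left _ (by positivity)
          exact inv_anti₀ hcminpos (hcmin_le m)
      _ = 2 * cmin⁻¹ * S := by
          rw [hS, Finset.mul_sum]
          exact Finset.sum_congr rfl fun m _ => by ring
  -- bound on |f'|
  have hfbnd : |(-(2*(x + c j)) / ((x + c j)^2)^2)| ≤ 2 * f * (c j)⁻¹ := hbnd j
  have hfpos : 0 < f := by have := hpos j; rw [hf]; positivity
  have hnum : |(-(2*(x + c j)) / ((x + c j)^2)^2 * S -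
      f * (∑ m, -(2*(x + c m)) / ((x + c m)^2)^2))| ≤
      2 * f * S * ((c j)⁻¹ + cmin⁻¹) := by
    calc |(-(2*(x + c j)) / ((x + c j)^2)^2 * S -
        f * (∑ m, -(2*(x + c m)) / ((x + c m)^2)^2))|
        ≤ |(-(2*(x + c j)) / ((x + c j)^2)^2)| * S +
          f * |∑ m, -(2*(x + c m)) / ((x + c m)^2)^2| := by
          refine le_trans (abs_sub _ _) ?_
          rw [abs_mul, abs_mul, abs_of_pos hgpos, abs_of_pos hfpos]
      _ ≤ (2 * f * (c j)⁻¹) * S + f * (2 * cmin⁻¹ * S) := by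
          gcongr
      _ = 2 * f * S * ((c j)⁻¹ + cmin⁻¹) := by ring
  rw [abs_div, abs_of_pos (by positivity : (0:ℝ) < S^2), div_le_iff₀ (by positivity)]
  calc |(-(2*(x + c j)) / ((x + c j)^2)^2 * S -
      f * (∑ m, -(2*(x + c m)) / ((x + c m)^2)^2))|
      ≤ 2 * f * S * ((c j)⁻¹ + cmin⁻¹) := hnum
    _ = 2 * (f / S) * ((c j)⁻¹ + cmin⁻¹) * S^2 := by
        field_simp
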